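/- Let G be a banner-free graph with a homogeneous set H, and let h be any vertex of H. Then G contains no odd hole if and only if both the subgraph of G induced by H and the subgraph of G induced by (V(G) − H) ∪ {h} contain no odd hole. -/

import Mathlib

open SimpleGraph
open Fin.NatCast Fin.CommRing

/-- The banner: a chordless 4-cycle 0-1-2-3-0 together with a fifth vertex 4
adjacent to exactly one vertex (vertex 0) of the cycle. -/
def banner : SimpleGraph (Fin 5) :=
  SimpleGraph.fromRel (fun i j =>
    (i = 0 ∧ j = 1) ∨ (i = 1 ∧ j = 2) ∨ (i = 2 ∧ j = 3) ∨ (i = 3 ∧ j = 0) ∨ (i = 0 ∧ j = 4))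

/-- A graph is banner-free if it has no induced subgraph isomorphic to the banner. -/
def BannerFree {V : Type*} (G : SimpleGraph V) : Prop := ¬ Nonempty (banner ↪g G)

/-- A graph is C5-free if it has no induced subgraph isomorphic to the chordless 5-cycle. -/
def C5Free {V : Type*} (G : SimpleGraph V) : Prop :=
  ¬ Nonempty (SimpleGraph.cycleGraph 5 ↪g G)

/-- A graph is odd-hole-free if it has no induced chordless cycle of odd length `n ≥ 5`
(odd holes are the odd chordless cycles with at least four, hence at least five, vertices). -/
def OddHoleFree {V : Type*} (G : SimpleGraph V) : Prop :=
  ∀ n : ℕ, 5 ≤ n → Odd n → ¬ Nonempty (SimpleGraph.cycleGraph n ↪g G)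

/-- `A` is an odd antihole of `G`: the subgraph induced by `A` is isomorphic to the
complement of a chordless cycle on an odd number `n ≥ 5` of vertices. -/
def IsOddAntihole {V : Type*} (G : SimpleGraph V) (A : Set V) : Prop :=
  ∃ n : ℕ, 5 ≤ n ∧ Odd n ∧ Nonempty ((SimpleGraph.cycleGraph n)ᶜ ≃g G.induce A)

/-- `H` is a homogeneous set of `G`: `2 ≤ |H| < |V(G)|` and every vertex outside `H`
is adjacent to all vertices of `H` or to none of them. -/
def IsHomogeneous {V : Type*} (G : SimpleGraph V) (H : Set V) : Prop :=
  2 ≤ H.ncard ∧ H ≠ Set.univ ∧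
    ∀ v ∉ H, (∀ h ∈ H, G.Adj v h) ∨ (∀ h ∈ H, ¬ G.Adj v h)

/-- A graph is perfect if every induced subgraph has chromatic number equal to
its clique number. -/
def IsPerfect {V : Type*} (G : SimpleGraph V) : Prop :=
  ∀ S : Set V, (G.induce S).chromaticNumber = ((G.induce S).cliqueNum : ℕ∞)

/-- A graph is perfectly divisible if every induced subgraph `G[S]` contains a set `X`
of vertices meeting all largest cliques of `G[S]` and inducing a perfect graph. -/
def PerfectlyDivisible {V : Type*} (G : SimpleGraph V) : Prop :=
  ∀ S : Set V, ∃ X ⊆ S, IsPerfect (G.induce X) ∧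
    ∀ t : Finset V, ↑t ⊆ S → G.IsNClique ((G.induce S).cliqueNum) t → ∃ x ∈ X, x ∈ t

/-- A graph is `k`-divisible if the vertex set of each of its induced subgraphs `G[S]`
having at least one edge can be partitioned into `k` sets, none of which contains a
clique of size `ω(G[S])`.  (A graph with no edges is trivially `k`-divisible.) -/
def KDivisible {V : Type*} (G : SimpleGraph V) (k : ℕ) : Prop :=
  ∀ S : Set V, (∃ a ∈ S, ∃ b ∈ S, G.Adj a b) →
    ∃ P : Fin k → Set V, (∀ v ∈ S, ∃! i, v ∈ P i) ∧
      ∀ i, P i ⊆ S ∧ ¬ ∃ t : Finset V, ↑t ⊆ P i ∧ G.IsNClique ((G.induce S).cliqueNum) t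

/-- The maximum total weight `α_w(G)` of a stable (independent) set of the weighted
graph `G`; stable sets of `G` are exactly the cliques of the complement of `G`. -/
noncomputable def alphaW {V : Type*} (G : SimpleGraph V) (w : V → ℤ) : ℤ :=
  sSup {x : ℤ | ∃ s : Finset V, Gᶜ.IsClique (↑s : Set V) ∧ x = ∑ v ∈ s, w v}

/-- `C` is a clique cutset of the connected graph `G` if `C` is a clique and
deleting `C` from `G` leaves a disconnected graph. -/
def IsCliqueCutset {V : Type*} (G : SimpleGraph V) (C : Set V) : Prop :=
  G.Connected ∧ G.IsClique C ∧ ¬ (G.induce Cᶜ).Preconnected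

private lemma fin_shift_ne {m k : ℕ} (h1 : 0 < k) (h2 : k < m + 5) (x : Fin (m+5)) :
    x + (k : Fin (m+5)) ≠ x := by
  intro he
  have h0 : (k : Fin (m+5)) = 0 := by
    have : x + (k : Fin (m+5)) = x + 0 := by rw [he, add_zero]
    exact add_left_cancel this
  have hv := congrArg Fin.val h0
  rw [Fin.val_natCast, Nat.mod_eq_of_lt h2] at hv
  simp only [Fin.val_zero] at hv
  omega

private lemma fin_one {m : ℕ} (x : Fin (m+5)) : x + 1 ≠ x := by
  have := fin_shift_ne (k := 1) one_pos (by omega) x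
  simpa using this

private lemma fin_two {m : ℕ} (x : Fin (m+5)) : x + 1 + 1 ≠ x := by
  have := fin_shift_ne (k := 2) (by omega) (by omega) x
  intro he; apply this
  rw [show ((2:ℕ) : Fin (m+5)) = 1 + 1 by push_cast; ring, ← add_assoc, he]

private lemma fin_three {m : ℕ} (x : Fin (m+5)) : x + 1 + 1 + 1 ≠ x := by
  have := fin_shift_ne (k := 3) (by omega) (by omega) x
  intro he; apply this
  rw [show ((3:ℕ) : Fin (m+5)) = 1 + 1 + 1 by push_cast; ring]
  rw [show x + (1 + 1 + 1) = x + 1 + 1 + 1 by ring, he]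

private lemma fin_four {m : ℕ} (x : Fin (m+5)) : x + 1 + 1 + 1 + 1 ≠ x := by
  have := fin_shift_ne (k := 4) (by omega) (by omega) x
  intro he; apply this
  rw [show ((4:ℕ) : Fin (m+5)) = 1 + 1 + 1 + 1 by push_cast; ring]
  rw [show x + (1 + 1 + 1 + 1) = x + 1 + 1 + 1 + 1 by ring, he]

/-- restrict an embedding whose range lies in `S` to the induced subgraph on `S` -/
private def embedIntoInduce {V : Type*} {G : SimpleGraph V} {n : ℕ}
    (f : SimpleGraph.cycleGraph n ↪g G) {S : Set V} (hs : ∀ i, f i ∈ S) :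
    SimpleGraph.cycleGraph n ↪g G.induce S where
  toFun i := ⟨f i, hs i⟩
  inj' a b hab := f.injective (congrArg Subtype.val hab)
  map_rel_iff' := by
    intro a b
    simp only [Function.Embedding.coeFn_mk, comap_adj, Function.Embedding.coe_subtype]
    exact f.map_adj_iff

/-- Let `G` be a banner-free graph with a homogeneous set `H` and let `h` be
any vertex of `H`.  Then `G` has no odd hole iff both `G[H]` and `G[(V(G) − H) ∪ {h}]`
have no odd hole. -/
theorem stmt_11 {V : Type*} [Fintype V] (G : SimpleGraph V)
    (hbf : BannerFree G)
    (H : Set V) (hH : IsHomogeneous G H) (h : V) (hh : h ∈ H) :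
    OddHoleFree G ↔
      (OddHoleFree (G.induce H) ∧ OddHoleFree (G.induce (Hᶜ ∪ {h}))) := by
  classical
  obtain ⟨-, -, hhom⟩ := hH
  constructor
  · intro hG
    refine ⟨fun n hn ho hne => ?_, fun n hn ho hne => ?_⟩ <;>
      obtain ⟨e⟩ := hne <;>
      exact hG n hn ho ⟨(SimpleGraph.Embedding.induce _).comp e⟩
  · rintro ⟨h1, h2⟩ n hn ho ⟨f⟩
    obtain ⟨m, rfl⟩ : ∃ m, n = m + 5 := ⟨n - 5, by omega⟩
    by_cases hA : ∀ i, f i ∈ H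
    · exact h1 (m+5) hn ho ⟨embedIntoInduce f hA⟩
    by_cases hB : ∀ i, f i ∉ H
    · exact h2 (m+5) hn ho ⟨embedIntoInduce f (fun i => Or.inl (hB i))⟩
    push_neg at hA hB
    obtain ⟨p0, hp0⟩ := hA
    obtain ⟨q0, hq0⟩ := hB
    have adj_iff : ∀ i j : Fin (m+5),
        (SimpleGraph.cycleGraph (m+5)).Adj i j ↔ i - j = 1 ∨ j - i = 1 :=
      fun i j => cycleGraph_adj
    -- find a boundary vertex: p with f p ∉ H and f (p+1) ∈ H
    have hex : ∃ k : ℕ, f (p0 + (k : Fin (m+5))) ∈ H := by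
      refine ⟨(q0 - p0).val, ?_⟩
      have : p0 + (((q0 - p0).val : ℕ) : Fin (m+5)) = q0 := by
        rw [Fin.cast_val_eq_self]; ring
      rw [this]; exact hq0
    set k0 := Nat.find hex with hk0def
    have hk0 : f (p0 + (k0 : Fin (m+5))) ∈ H := Nat.find_spec hex
    have hk0ne : k0 ≠ 0 := by
      intro hz
      rw [hz] at hk0
      simp only [Nat.cast_zero, add_zero] at hk0
      exact hp0 hk0
    set p := p0 + ((k0 - 1 : ℕ) : Fin (m+5)) with hpdef
    have hpH : f p ∉ H := Nat.find_min hex (by omega)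
    set a := p + 1 with hadef
    have haH : f a ∈ H := by
      have : a = p0 + (k0 : Fin (m+5)) := by
        rw [hadef, hpdef, add_assoc]
        congr 1
        rw [show ((k0 - 1 : ℕ) : Fin (m+5)) + 1 = ((k0 - 1 + 1 : ℕ) : Fin (m+5)) by
          push_cast; ring]
        congr 1
        omega
      rw [this]; exact hk0
    have hpa : (SimpleGraph.cycleGraph (m+5)).Adj p a :=
      (adj_iff p a).mpr (Or.inr (by rw [hadef]; exact add_sub_cancel_left p 1))
    -- every vertex of the hole in H equals a
    have step : ∀ j, f j ∈ H → j ≠ a → p = j + 1 := by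
      intro j hjH hja
      have h1' : G.Adj (f p) (f a) := f.map_adj_iff.mpr hpa
      have h2' : G.Adj (f p) (f j) := by
        rcases hhom (f p) hpH with hall | hnone
        · exact hall _ hjH
        · exact absurd h1' (hnone _ haH)
      rcases (adj_iff p j).mp (f.map_adj_iff.mp h2') with hc | hc
      · rw [sub_eq_iff_eq_add] at hc
        exact hc.trans (add_comm 1 j)
      · exfalso
        rw [sub_eq_iff_eq_add] at hc
        exact hja (hc.trans ((add_comm 1 p).trans hadef.symm))
    have hS : ∀ j, f j ∈ H → j = a := by
      by_contra hcon
      push_neg at hcon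
      obtain ⟨j, hjH, hja⟩ := hcon
      have hpj : p = j + 1 := step j hjH hja
      set q := a + 1 with hqdef
      have hqa : q ≠ a := fin_one a
      have hqform : q = j + 1 + 1 + 1 := by rw [hqdef, hadef, hpj]
      have hqj : q ≠ j := by rw [hqform]; exact fin_three j
      have hqH : f q ∉ H := by
        intro hq
        exact hqj (add_right_cancel ((step q hq hqa).symm.trans hpj))
      have hqadj : G.Adj (f q) (f a) :=
        f.map_adj_iff.mpr ((adj_iff q a).mpr (Or.inl (by rw [hqdef]; exact add_sub_cancel_left a 1)))
      have hqj' : G.Adj (f q) (f j) := by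
        rcases hhom (f q) hqH with hall | hnone
        · exact hall _ hjH
        · exact absurd hqadj (hnone _ haH)
      rcases (adj_iff q j).mp (f.map_adj_iff.mp hqj') with hc | hc
      · rw [sub_eq_iff_eq_add] at hc
        exact fin_two (j+1) ((hqform.symm.trans hc).trans (add_comm 1 j))
      · rw [sub_eq_iff_eq_add] at hc
        have hc' : j = 1 + (j+1+1+1) := by rw [← hqform]; exact hc
        exact fin_four j ((add_comm (j+1+1+1) 1).trans hc'.symm)
    -- swap a ↦ h
    have hmem : ∀ i : Fin (m+5), i ≠ a → f i ∈ Hᶜ ∪ {h} :=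
      fun i hi => Or.inl (fun hFi => hi (hS i hFi))
    have hfne : ∀ i : Fin (m+5), i ≠ a → f i ≠ h := by
      intro i hi he
      exact (fun hFi => hi (hS i hFi) : f i ∉ H) (he ▸ hh)
    have hswap : ∀ i : Fin (m+5), i ≠ a → (G.Adj h (f i) ↔ G.Adj (f a) (f i)) := by
      intro i hi
      have hfiH : f i ∉ H := fun hFi => hi (hS i hFi)
      rcases hhom (f i) hfiH with hall | hnone
      · exact iff_of_true (hall h hh).symm (hall (f a) haH).symm
      · exact iff_of_false (fun hc => hnone h hh hc.symm) (fun hc => hnone (f a) haH hc.symm)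
    refine h2 (m+5) hn ho ⟨⟨⟨fun i => if hi : i = a then ⟨h, Set.mem_union_right _ (Set.mem_singleton h)⟩
        else ⟨f i, hmem i hi⟩, ?_⟩, ?_⟩⟩
    · refine (show Function.Injective _ from ?_)
      intro i j hij
      dsimp only at hij
      by_cases hi : i = a <;> by_cases hj : j = a
      · rw [hi, hj]
      · exfalso; rw [dif_pos hi, dif_neg hj] at hij
        exact hfne j hj (congrArg Subtype.val hij).symm
      · exfalso; rw [dif_neg hi, dif_pos hj] at hij
        exact hfne i hi (congrArg Subtype.val hij)
      · rw [dif_neg hi, dif_neg hj] at hij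
        exact f.injective.eq_iff.mp (congrArg Subtype.val hij)
    · intro i j
      simp only [Function.Embedding.coeFn_mk, comap_adj, Function.Embedding.coe_subtype]
      by_cases hi : i = a <;> by_cases hj : j = a
      · rw [dif_pos hi, dif_pos hj, hi, hj]
        exact iff_of_false (G.irrefl) ((SimpleGraph.cycleGraph (m+5)).irrefl)
      · rw [dif_pos hi, dif_neg hj, hi, hswap j hj, f.map_adj_iff]
      · rw [dif_neg hi, dif_pos hj, hj, G.adj_comm, (SimpleGraph.cycleGraph (m+5)).adj_comm,
          hswap i hi, f.map_adj_iff]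
      · rw [dif_neg hi, dif_neg hj]
        exact f.map_adj_iff
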